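/- The operator Q = Σ_j (X_j X_{j+1} Y_{j+2} X_{j+3} Z_{j+4} + X_j Y_{j+2} Z_{j+3}) commutes with the Hamiltonian H = Σ_j (c₁ X_j X_{j+1} Z_{j+2} + c₂ Z_j X_{j+1} X_{j+2}) on a periodic chain (take c₁ = c₂ = 1), for chain length N ≥ 7 with indices mod N. -/

import Mathlib

open Matrix Kronecker

noncomputable section

/-- Pauli X. -/
def σ1 : Matrix (Fin 2) (Fin 2) ℂ := !![0, 1; 1, 0]
/-- Pauli Y. -/
def σ2 : Matrix (Fin 2) (Fin 2) ℂ := !![0, -Complex.I; Complex.I, 0]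
/-- Pauli Z. -/
def σ3 : Matrix (Fin 2) (Fin 2) ℂ := !![1, 0; 0, -1]

/-- The operator acting as `A` on site `j` of a chain of `N` sites with local
space indexed by `d`, and as the identity on all other sites. -/
def site {d : Type} [Fintype d] [DecidableEq d] (N : ℕ) (j : ℕ)
    (A : Matrix d d ℂ) : Matrix (Fin N → d) (Fin N → d) ℂ :=
  Matrix.of fun x y =>
    ∏ k : Fin N, if (k : ℕ) = j then A (x k) (y k) else (if x k = y k then 1 else 0)

/-- Pauli X at site `j` of a spin-1/2 chain of `N` sites. -/
def PX (N j : ℕ) : Matrix (Fin N → Fin 2) (Fin N → Fin 2) ℂ := site N j σ1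
/-- Pauli Y at site `j`. -/
def PY (N j : ℕ) : Matrix (Fin N → Fin 2) (Fin N → Fin 2) ℂ := site N j σ2
/-- Pauli Z at site `j`. -/
def PZ (N j : ℕ) : Matrix (Fin N → Fin 2) (Fin N → Fin 2) ℂ := site N j σ3

namespace S6

abbrev M2 := Matrix (Fin 2) (Fin 2) ℂ

def tp (N : ℕ) (f : ℕ → M2) : Matrix (Fin N → Fin 2) (Fin N → Fin 2) ℂ :=
  Matrix.of fun x y => ∏ k : Fin N, f k (x k) (y k)

lemma site_eq_tp (N : ℕ) (j : ℕ) (A : M2) :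
    site N j A = tp N (fun k => if k = j then A else 1) := by
  unfold site tp
  ext x y
  simp only [Matrix.of_apply]
  apply Finset.prod_congr rfl
  intro k _
  by_cases h : (k : ℕ) = j <;> simp [h, Matrix.one_apply]

lemma tp_mul (N : ℕ) (f g : ℕ → M2) :
    tp N f * tp N g = tp N (fun k => f k * g k) := by
  ext x y
  simp only [tp, Matrix.mul_apply, Matrix.of_apply]
  have h : ∀ z : Fin N → Fin 2,
      (∏ k : Fin N, f k (x k) (z k)) * (∏ k : Fin N, g k (z k) (y k))
        = ∏ k : Fin N, (fun k2 => f k (x k) k2 * g k k2 (y k)) (z k) := by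
    intro z; rw [← Finset.prod_mul_distrib]
  simp only [h]
  rw [← Fintype.prod_sum (κ := fun _ : Fin N => Fin 2)
    (fun k k2 => f k (x k) k2 * g k k2 (y k))]

lemma tp_smul_point {N : ℕ} (p : ℕ) (hp : p < N) (f g : ℕ → M2) (c : ℂ)
    (hfg : ∀ k, k ≠ p → f k = g k) (hfp : f p = c • g p) : tp N f = c • tp N g := by
  ext x y
  simp only [tp, Matrix.smul_apply, Matrix.of_apply, smul_eq_mul]
  have hP : (⟨p, hp⟩ : Fin N) ∈ Finset.univ := Finset.mem_univ _
  rw [← Finset.mul_prod_erase _ _ hP, ← Finset.mul_prod_erase _ (fun k : Fin N => g k (x k) (y k)) hP]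
  have h1 : ∀ k ∈ Finset.univ.erase (⟨p, hp⟩ : Fin N),
      f (k : ℕ) (x k) (y k) = g (k : ℕ) (x k) (y k) := by
    intro k hk
    rw [hfg]
    intro hkp
    exact (Finset.mem_erase.mp hk).1 (Fin.ext hkp)
  rw [Finset.prod_congr rfl h1, hfp]
  simp only [Matrix.smul_apply, smul_eq_mul]
  ring

lemma site_comm {N : ℕ} {p q : ℕ} (h : p ≠ q) (A B : M2) :
    Commute (site N p A) (site N q B) := by
  unfold Commute SemiconjBy
  rw [site_eq_tp, site_eq_tp, tp_mul, tp_mul]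
  apply congrArg
  funext k
  by_cases h1 : k = p <;> by_cases h2 : k = q
  · exact absurd (h1.symm.trans h2) h
  · simp [h1, h2, h, h.symm]
  · simp [h1, h2, h, h.symm]
  · simp [h1, h2]

lemma vne {N : ℕ} [NeZero N] {x y : ZMod N} (h : x ≠ y) : x.val ≠ y.val :=
  fun hv => h (ZMod.val_injective N hv)

lemma cast_ne {N : ℕ} [NeZero N] {a b : ℕ} (ha : a < N) (hb : b < N) (h : a ≠ b) :
    (a : ZMod N) ≠ (b : ZMod N) := by
  intro he
  apply h
  have h2 := congrArg ZMod.val he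
  rwa [ZMod.val_natCast_of_lt ha, ZMod.val_natCast_of_lt hb] at h2

lemma neg_cast {N : ℕ} (hN : 7 ≤ N) (a : ℕ) (ha : a ≤ N) :
    ((N - a : ℕ) : ZMod N) = -(a : ZMod N) := by
  haveI : NeZero N := ⟨by omega⟩
  have h1 : ((N : ℕ) : ZMod N) = 0 := ZMod.natCast_self N
  push_cast [Nat.cast_sub ha]
  rw [h1]
  ring

lemma ne_lt7 {N : ℕ} (hN : 7 ≤ N) {i : ℕ} (h1 : 0 < i) (h2 : i < 7) :
    ((i : ℕ) : ZMod N) ≠ ((7 : ℕ) : ZMod N) := by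
  haveI : NeZero N := ⟨by omega⟩
  intro h
  have h3 := congrArg ZMod.val h
  rw [ZMod.val_natCast, ZMod.val_natCast] at h3
  rw [Nat.mod_eq_of_lt (by omega)] at h3
  rcases eq_or_lt_of_le hN with h7 | h7
  · rw [← h7] at h3; omega
  · rw [Nat.mod_eq_of_lt h7] at h3; omega

lemma sum_shift {N : ℕ} [NeZero N] {α : Type*} [AddCommMonoid α] (c : ZMod N) (f : ZMod N → α) :
    ∑ x : ZMod N, f (x + c) = ∑ x : ZMod N, f x :=
  Fintype.sum_equiv (Equiv.addRight c) _ _ (fun _ => rfl)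

lemma sum_shiftL {N : ℕ} [NeZero N] {α : Type*} [AddCommMonoid α] (x : ZMod N) (f : ZMod N → α) :
    ∑ d : ZMod N, f (x + d) = ∑ y : ZMod N, f y :=
  Fintype.sum_equiv (Equiv.addLeft x) _ _ (fun _ => rfl)

lemma pos_ne {N : ℕ} (hN : 7 ≤ N) (x : ZMod N) {a b : ℕ} (ha : a < 7) (hb : b < 7) (h : a ≠ b) :
    (x + (a : ZMod N)).val ≠ (x + (b : ZMod N)).val := by
  haveI : NeZero N := ⟨by omega⟩
  apply vne
  intro he
  exact (cast_ne (by omega) (by omega) h) (add_left_cancel he)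


lemma m11 : σ1 * σ1 = 1 := by
  ext i j; fin_cases i <;> fin_cases j <;>
    simp [σ1, σ2, σ3, Matrix.mul_apply, Fin.sum_univ_two, Matrix.one_apply]

lemma m12 : σ1 * σ2 = Complex.I • σ3 := by
  ext i j; fin_cases i <;> fin_cases j <;>
    simp [σ1, σ2, σ3, Matrix.mul_apply, Fin.sum_univ_two]

lemma m13 : σ1 * σ3 = (-Complex.I) • σ2 := by
  ext i j; fin_cases i <;> fin_cases j <;>
    simp [σ1, σ2, σ3, Matrix.mul_apply, Fin.sum_univ_two]

lemma m21 : σ2 * σ1 = (-Complex.I) • σ3 := by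
  ext i j; fin_cases i <;> fin_cases j <;>
    simp [σ1, σ2, σ3, Matrix.mul_apply, Fin.sum_univ_two]

lemma m22 : σ2 * σ2 = 1 := by
  ext i j; fin_cases i <;> fin_cases j <;>
    simp [σ1, σ2, σ3, Matrix.mul_apply, Fin.sum_univ_two, Matrix.one_apply]

lemma m23 : σ2 * σ3 = Complex.I • σ1 := by
  ext i j; fin_cases i <;> fin_cases j <;>
    simp [σ1, σ2, σ3, Matrix.mul_apply, Fin.sum_univ_two]

lemma m31 : σ3 * σ1 = Complex.I • σ2 := by
  ext i j; fin_cases i <;> fin_cases j <;>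
    simp [σ1, σ2, σ3, Matrix.mul_apply, Fin.sum_univ_two]

lemma m32 : σ3 * σ2 = (-Complex.I) • σ1 := by
  ext i j; fin_cases i <;> fin_cases j <;>
    simp [σ1, σ2, σ3, Matrix.mul_apply, Fin.sum_univ_two]

lemma m33 : σ3 * σ3 = 1 := by
  ext i j; fin_cases i <;> fin_cases j <;>
    simp [σ1, σ2, σ3, Matrix.mul_apply, Fin.sum_univ_two, Matrix.one_apply]

def str (N : ℕ) (x : ZMod N) (A0 A1 A2 A3 A4 A5 A6 : M2) :
    Matrix (Fin N → Fin 2) (Fin N → Fin 2) ℂ :=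
  tp N (fun k =>
    if k = x.val then A0 else if k = (x+1).val then A1 else if k = (x+2).val then A2
    else if k = (x+3).val then A3 else if k = (x+4).val then A4
    else if k = (x+5).val then A5 else if k = (x+6).val then A6 else 1)

def qt1 (N : ℕ) (x : ZMod N) := PX N x.val * PX N (x+1).val * PY N (x+2).val
    * PX N (x+3).val * PZ N (x+4).val
def qt2 (N : ℕ) (x : ZMod N) := PX N x.val * PY N (x+2).val * PZ N (x+3).val
def ht1 (N : ℕ) (x : ZMod N) := PX N x.val * PX N (x+1).val * PZ N (x+2).val
def ht2 (N : ℕ) (x : ZMod N) := PZ N x.val * PX N (x+1).val * PX N (x+2).val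
def qsum (N : ℕ) (x : ZMod N) := qt1 N x + qt2 N x
def hsum (N : ℕ) (x : ZMod N) := ht1 N x + ht2 N x

lemma tp_one (N : ℕ) : tp N (fun _ => (1 : M2)) = 1 := by
  ext x y
  simp only [tp, Matrix.of_apply]
  by_cases hxy : x = y
  · subst hxy
    simp [Matrix.one_apply]
  · obtain ⟨k, hk⟩ := Function.ne_iff.mp hxy
    rw [Matrix.one_apply_ne hxy]
    exact Finset.prod_eq_zero (Finset.mem_univ k) (by simp [Matrix.one_apply, hk])

lemma site_one (N : ℕ) (p : ℕ) : site N p (1 : M2) = 1 := by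
  rw [site_eq_tp, show (fun k => if k = p then (1:M2) else 1) = fun _ => (1:M2) from
    funext fun k => by split_ifs <;> rfl, tp_one]

lemma site_smul (N : ℕ) (p : ℕ) (hp : p < N) (c : ℂ) (A : M2) :
    site N p (c • A) = c • site N p A := by
  rw [site_eq_tp, site_eq_tp]
  apply tp_smul_point p hp
  · intro k hk; simp [hk]
  · simp

lemma peel0 (N : ℕ) [NeZero N] (hN : 7 ≤ N) (x : ZMod N) (A0 A1 A2 A3 A4 A5 A6 : M2) :
    tp N (fun k => if k = x.val then A0 else if k = (x+1).val then A1 else if k = (x+2).val then A2 else if k = (x+3).val then A3 else if k = (x+4).val then A4 else if k = (x+5).val then A5 else if k = (x+6).val then A6 else 1)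
      = site N x.val A0 * tp N (fun k => if k = (x+1).val then A1 else if k = (x+2).val then A2 else if k = (x+3).val then A3 else if k = (x+4).val then A4 else if k = (x+5).val then A5 else if k = (x+6).val then A6 else 1) := by
  have e1 : x.val ≠ (x+1).val := by
    have h := pos_ne hN x (a := 0) (b := 1) (by norm_num) (by norm_num) (by norm_num)
    simpa using h
  have e2 : x.val ≠ (x+2).val := by
    have h := pos_ne hN x (a := 0) (b := 2) (by norm_num) (by norm_num) (by norm_num)
    simpa using h
  have e3 : x.val ≠ (x+3).val := by
    have h := pos_ne hN x (a := 0) (b := 3) (by norm_num) (by norm_num) (by norm_num)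
    simpa using h
  have e4 : x.val ≠ (x+4).val := by
    have h := pos_ne hN x (a := 0) (b := 4) (by norm_num) (by norm_num) (by norm_num)
    simpa using h
  have e5 : x.val ≠ (x+5).val := by
    have h := pos_ne hN x (a := 0) (b := 5) (by norm_num) (by norm_num) (by norm_num)
    simpa using h
  have e6 : x.val ≠ (x+6).val := by
    have h := pos_ne hN x (a := 0) (b := 6) (by norm_num) (by norm_num) (by norm_num)
    simpa using h
  rw [site_eq_tp, tp_mul]
  apply congrArg
  funext k
  by_cases h : k = x.val
  · simp [h, e1, e2, e3, e4, e5, e6]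
  · simp [h]

lemma peel1 (N : ℕ) [NeZero N] (hN : 7 ≤ N) (x : ZMod N) (A1 A2 A3 A4 A5 A6 : M2) :
    tp N (fun k => if k = (x+1).val then A1 else if k = (x+2).val then A2 else if k = (x+3).val then A3 else if k = (x+4).val then A4 else if k = (x+5).val then A5 else if k = (x+6).val then A6 else 1)
      = site N (x+1).val A1 * tp N (fun k => if k = (x+2).val then A2 else if k = (x+3).val then A3 else if k = (x+4).val then A4 else if k = (x+5).val then A5 else if k = (x+6).val then A6 else 1) := by
  have e2 : (x+1).val ≠ (x+2).val := by
    have h := pos_ne hN x (a := 1) (b := 2) (by norm_num) (by norm_num) (by norm_num)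
    simpa using h
  have e3 : (x+1).val ≠ (x+3).val := by
    have h := pos_ne hN x (a := 1) (b := 3) (by norm_num) (by norm_num) (by norm_num)
    simpa using h
  have e4 : (x+1).val ≠ (x+4).val := by
    have h := pos_ne hN x (a := 1) (b := 4) (by norm_num) (by norm_num) (by norm_num)
    simpa using h
  have e5 : (x+1).val ≠ (x+5).val := by
    have h := pos_ne hN x (a := 1) (b := 5) (by norm_num) (by norm_num) (by norm_num)
    simpa using h
  have e6 : (x+1).val ≠ (x+6).val := by
    have h := pos_ne hN x (a := 1) (b := 6) (by norm_num) (by norm_num) (by norm_num)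
    simpa using h
  rw [site_eq_tp, tp_mul]
  apply congrArg
  funext k
  by_cases h : k = (x+1).val
  · simp [h, e2, e3, e4, e5, e6]
  · simp [h]

lemma peel2 (N : ℕ) [NeZero N] (hN : 7 ≤ N) (x : ZMod N) (A2 A3 A4 A5 A6 : M2) :
    tp N (fun k => if k = (x+2).val then A2 else if k = (x+3).val then A3 else if k = (x+4).val then A4 else if k = (x+5).val then A5 else if k = (x+6).val then A6 else 1)
      = site N (x+2).val A2 * tp N (fun k => if k = (x+3).val then A3 else if k = (x+4).val then A4 else if k = (x+5).val then A5 else if k = (x+6).val then A6 else 1) := by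
  have e3 : (x+2).val ≠ (x+3).val := by
    have h := pos_ne hN x (a := 2) (b := 3) (by norm_num) (by norm_num) (by norm_num)
    simpa using h
  have e4 : (x+2).val ≠ (x+4).val := by
    have h := pos_ne hN x (a := 2) (b := 4) (by norm_num) (by norm_num) (by norm_num)
    simpa using h
  have e5 : (x+2).val ≠ (x+5).val := by
    have h := pos_ne hN x (a := 2) (b := 5) (by norm_num) (by norm_num) (by norm_num)
    simpa using h
  have e6 : (x+2).val ≠ (x+6).val := by
    have h := pos_ne hN x (a := 2) (b := 6) (by norm_num) (by norm_num) (by norm_num)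
    simpa using h
  rw [site_eq_tp, tp_mul]
  apply congrArg
  funext k
  by_cases h : k = (x+2).val
  · simp [h, e3, e4, e5, e6]
  · simp [h]

lemma peel3 (N : ℕ) [NeZero N] (hN : 7 ≤ N) (x : ZMod N) (A3 A4 A5 A6 : M2) :
    tp N (fun k => if k = (x+3).val then A3 else if k = (x+4).val then A4 else if k = (x+5).val then A5 else if k = (x+6).val then A6 else 1)
      = site N (x+3).val A3 * tp N (fun k => if k = (x+4).val then A4 else if k = (x+5).val then A5 else if k = (x+6).val then A6 else 1) := by
  have e4 : (x+3).val ≠ (x+4).val := by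
    have h := pos_ne hN x (a := 3) (b := 4) (by norm_num) (by norm_num) (by norm_num)
    simpa using h
  have e5 : (x+3).val ≠ (x+5).val := by
    have h := pos_ne hN x (a := 3) (b := 5) (by norm_num) (by norm_num) (by norm_num)
    simpa using h
  have e6 : (x+3).val ≠ (x+6).val := by
    have h := pos_ne hN x (a := 3) (b := 6) (by norm_num) (by norm_num) (by norm_num)
    simpa using h
  rw [site_eq_tp, tp_mul]
  apply congrArg
  funext k
  by_cases h : k = (x+3).val
  · simp [h, e4, e5, e6]
  · simp [h]

lemma peel4 (N : ℕ) [NeZero N] (hN : 7 ≤ N) (x : ZMod N) (A4 A5 A6 : M2) :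
    tp N (fun k => if k = (x+4).val then A4 else if k = (x+5).val then A5 else if k = (x+6).val then A6 else 1)
      = site N (x+4).val A4 * tp N (fun k => if k = (x+5).val then A5 else if k = (x+6).val then A6 else 1) := by
  have e5 : (x+4).val ≠ (x+5).val := by
    have h := pos_ne hN x (a := 4) (b := 5) (by norm_num) (by norm_num) (by norm_num)
    simpa using h
  have e6 : (x+4).val ≠ (x+6).val := by
    have h := pos_ne hN x (a := 4) (b := 6) (by norm_num) (by norm_num) (by norm_num)
    simpa using h
  rw [site_eq_tp, tp_mul]
  apply congrArg
  funext k
  by_cases h : k = (x+4).val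
  · simp [h, e5, e6]
  · simp [h]

lemma peel5 (N : ℕ) [NeZero N] (hN : 7 ≤ N) (x : ZMod N) (A5 A6 : M2) :
    tp N (fun k => if k = (x+5).val then A5 else if k = (x+6).val then A6 else 1)
      = site N (x+5).val A5 * tp N (fun k => if k = (x+6).val then A6 else 1) := by
  have e6 : (x+5).val ≠ (x+6).val := by
    have h := pos_ne hN x (a := 5) (b := 6) (by norm_num) (by norm_num) (by norm_num)
    simpa using h
  rw [site_eq_tp, tp_mul]
  apply congrArg
  funext k
  by_cases h : k = (x+5).val
  · simp [h, e6]
  · simp [h]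

lemma str_sites (N : ℕ) [NeZero N] (hN : 7 ≤ N) (x : ZMod N) (A0 A1 A2 A3 A4 A5 A6 : M2) :
    str N x A0 A1 A2 A3 A4 A5 A6 = site N x.val A0 * site N (x+1).val A1 * site N (x+2).val A2 * site N (x+3).val A3 * site N (x+4).val A4 * site N (x+5).val A5 * site N (x+6).val A6 := by
  unfold str
  rw [peel0 N hN x, peel1 N hN x, peel2 N hN x, peel3 N hN x, peel4 N hN x, peel5 N hN x,
    ← site_eq_tp]
  simp only [mul_assoc]

lemma str_mul (N : ℕ) (x : ZMod N) (A0 A1 A2 A3 A4 A5 A6 B0 B1 B2 B3 B4 B5 B6 : M2) :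
    str N x A0 A1 A2 A3 A4 A5 A6 * str N x B0 B1 B2 B3 B4 B5 B6
      = str N x (A0*B0) (A1*B1) (A2*B2) (A3*B3) (A4*B4) (A5*B5) (A6*B6) := by
  unfold str
  rw [tp_mul]
  apply congrArg
  funext k
  split_ifs <;> simp

lemma ssm0 (N : ℕ) [NeZero N] (hN : 7 ≤ N) (x : ZMod N) (c : ℂ) (A0 A1 A2 A3 A4 A5 A6 : M2) :
    str N x (c • A0) A1 A2 A3 A4 A5 A6 = c • str N x A0 A1 A2 A3 A4 A5 A6 := by
  rw [str_sites N hN x, str_sites N hN x, site_smul N _ (ZMod.val_lt _)]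
  simp only [smul_mul_assoc, mul_smul_comm]

lemma ssm1 (N : ℕ) [NeZero N] (hN : 7 ≤ N) (x : ZMod N) (c : ℂ) (A0 A1 A2 A3 A4 A5 A6 : M2) :
    str N x A0 (c • A1) A2 A3 A4 A5 A6 = c • str N x A0 A1 A2 A3 A4 A5 A6 := by
  rw [str_sites N hN x, str_sites N hN x, site_smul N _ (ZMod.val_lt _)]
  simp only [smul_mul_assoc, mul_smul_comm]

lemma ssm2 (N : ℕ) [NeZero N] (hN : 7 ≤ N) (x : ZMod N) (c : ℂ) (A0 A1 A2 A3 A4 A5 A6 : M2) :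
    str N x A0 A1 (c • A2) A3 A4 A5 A6 = c • str N x A0 A1 A2 A3 A4 A5 A6 := by
  rw [str_sites N hN x, str_sites N hN x, site_smul N _ (ZMod.val_lt _)]
  simp only [smul_mul_assoc, mul_smul_comm]

lemma ssm3 (N : ℕ) [NeZero N] (hN : 7 ≤ N) (x : ZMod N) (c : ℂ) (A0 A1 A2 A3 A4 A5 A6 : M2) :
    str N x A0 A1 A2 (c • A3) A4 A5 A6 = c • str N x A0 A1 A2 A3 A4 A5 A6 := by
  rw [str_sites N hN x, str_sites N hN x, site_smul N _ (ZMod.val_lt _)]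
  simp only [smul_mul_assoc, mul_smul_comm]

lemma ssm4 (N : ℕ) [NeZero N] (hN : 7 ≤ N) (x : ZMod N) (c : ℂ) (A0 A1 A2 A3 A4 A5 A6 : M2) :
    str N x A0 A1 A2 A3 (c • A4) A5 A6 = c • str N x A0 A1 A2 A3 A4 A5 A6 := by
  rw [str_sites N hN x, str_sites N hN x, site_smul N _ (ZMod.val_lt _)]
  simp only [smul_mul_assoc, mul_smul_comm]

lemma ssm5 (N : ℕ) [NeZero N] (hN : 7 ≤ N) (x : ZMod N) (c : ℂ) (A0 A1 A2 A3 A4 A5 A6 : M2) :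
    str N x A0 A1 A2 A3 A4 (c • A5) A6 = c • str N x A0 A1 A2 A3 A4 A5 A6 := by
  rw [str_sites N hN x, str_sites N hN x, site_smul N _ (ZMod.val_lt _)]
  simp only [smul_mul_assoc, mul_smul_comm]

lemma ssm6 (N : ℕ) [NeZero N] (hN : 7 ≤ N) (x : ZMod N) (c : ℂ) (A0 A1 A2 A3 A4 A5 A6 : M2) :
    str N x A0 A1 A2 A3 A4 A5 (c • A6) = c • str N x A0 A1 A2 A3 A4 A5 A6 := by
  rw [str_sites N hN x, str_sites N hN x, site_smul N _ (ZMod.val_lt _)]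
  simp only [smul_mul_assoc, mul_smul_comm]

lemma sstr1 (N : ℕ) [NeZero N] (hN : 7 ≤ N) (A0 A1 A2 A3 A4 A5 : M2) :
    ∑ x : ZMod N, str N x 1 A0 A1 A2 A3 A4 A5 = ∑ x : ZMod N, str N x A0 A1 A2 A3 A4 A5 1 := by
  rw [← sum_shift (1 : ZMod N) (fun z => str N z A0 A1 A2 A3 A4 A5 1)]
  refine Finset.sum_congr rfl (fun x _ => ?_)
  rw [str_sites N hN x, str_sites N hN (x+1)]
  rw [show x+1+1 = x+2 from by ring, show x+1+2 = x+3 from by ring, show x+1+3 = x+4 from by ring, show x+1+4 = x+5 from by ring, show x+1+5 = x+6 from by ring, show x+1+6 = x+7 from by ring]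
  simp only [site_one, one_mul, mul_one]

lemma qc1_0 (N : ℕ) [NeZero N] (hN : 7 ≤ N) (x : ZMod N) :
    qt1 N x = str N x σ1 σ1 σ2 σ1 σ3 1 1 := by
  unfold qt1 PX PY PZ
  rw [str_sites N hN x]
  simp only [site_one, one_mul, mul_one]

lemma qc2_0 (N : ℕ) [NeZero N] (hN : 7 ≤ N) (x : ZMod N) :
    qt2 N x = str N x σ1 1 σ2 σ3 1 1 1 := by
  unfold qt2 PX PY PZ
  rw [str_sites N hN x]
  simp only [site_one, one_mul, mul_one]

lemma qc1_1 (N : ℕ) [NeZero N] (hN : 7 ≤ N) (x : ZMod N) :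
    qt1 N (x + 1) = str N x 1 σ1 σ1 σ2 σ1 σ3 1 := by
  unfold qt1 PX PY PZ
  rw [show x+1+1 = x+2 from by ring, show x+1+2 = x+3 from by ring, show x+1+3 = x+4 from by ring, show x+1+4 = x+5 from by ring]
  rw [str_sites N hN x]
  simp only [site_one, one_mul, mul_one]

lemma qc2_1 (N : ℕ) [NeZero N] (hN : 7 ≤ N) (x : ZMod N) :
    qt2 N (x + 1) = str N x 1 σ1 1 σ2 σ3 1 1 := by
  unfold qt2 PX PY PZ
  rw [show x+1+2 = x+3 from by ring, show x+1+3 = x+4 from by ring]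
  rw [str_sites N hN x]
  simp only [site_one, one_mul, mul_one]

lemma qc1_2 (N : ℕ) [NeZero N] (hN : 7 ≤ N) (x : ZMod N) :
    qt1 N (x + 2) = str N x 1 1 σ1 σ1 σ2 σ1 σ3 := by
  unfold qt1 PX PY PZ
  rw [show x+2+1 = x+3 from by ring, show x+2+2 = x+4 from by ring, show x+2+3 = x+5 from by ring, show x+2+4 = x+6 from by ring]
  rw [str_sites N hN x]
  simp only [site_one, one_mul, mul_one]

lemma qc2_2 (N : ℕ) [NeZero N] (hN : 7 ≤ N) (x : ZMod N) :
    qt2 N (x + 2) = str N x 1 1 σ1 1 σ2 σ3 1 := by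
  unfold qt2 PX PY PZ
  rw [show x+2+2 = x+4 from by ring, show x+2+3 = x+5 from by ring]
  rw [str_sites N hN x]
  simp only [site_one, one_mul, mul_one]

lemma hc1_0 (N : ℕ) [NeZero N] (hN : 7 ≤ N) (x : ZMod N) :
    ht1 N x = str N x σ1 σ1 σ3 1 1 1 1 := by
  unfold ht1 PX PZ
  rw [str_sites N hN x]
  simp only [site_one, one_mul, mul_one]

lemma hc2_0 (N : ℕ) [NeZero N] (hN : 7 ≤ N) (x : ZMod N) :
    ht2 N x = str N x σ3 σ1 σ1 1 1 1 1 := by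
  unfold ht2 PX PZ
  rw [str_sites N hN x]
  simp only [site_one, one_mul, mul_one]

lemma hc1_1 (N : ℕ) [NeZero N] (hN : 7 ≤ N) (x : ZMod N) :
    ht1 N (x + 1) = str N x 1 σ1 σ1 σ3 1 1 1 := by
  unfold ht1 PX PZ
  rw [show x+1+1 = x+2 from by ring, show x+1+2 = x+3 from by ring]
  rw [str_sites N hN x]
  simp only [site_one, one_mul, mul_one]

lemma hc2_1 (N : ℕ) [NeZero N] (hN : 7 ≤ N) (x : ZMod N) :
    ht2 N (x + 1) = str N x 1 σ3 σ1 σ1 1 1 1 := by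
  unfold ht2 PX PZ
  rw [show x+1+1 = x+2 from by ring, show x+1+2 = x+3 from by ring]
  rw [str_sites N hN x]
  simp only [site_one, one_mul, mul_one]

lemma hc1_2 (N : ℕ) [NeZero N] (hN : 7 ≤ N) (x : ZMod N) :
    ht1 N (x + 2) = str N x 1 1 σ1 σ1 σ3 1 1 := by
  unfold ht1 PX PZ
  rw [show x+2+1 = x+3 from by ring, show x+2+2 = x+4 from by ring]
  rw [str_sites N hN x]
  simp only [site_one, one_mul, mul_one]

lemma hc2_2 (N : ℕ) [NeZero N] (hN : 7 ≤ N) (x : ZMod N) :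
    ht2 N (x + 2) = str N x 1 1 σ3 σ1 σ1 1 1 := by
  unfold ht2 PX PZ
  rw [show x+2+1 = x+3 from by ring, show x+2+2 = x+4 from by ring]
  rw [str_sites N hN x]
  simp only [site_one, one_mul, mul_one]

lemma hc1_3 (N : ℕ) [NeZero N] (hN : 7 ≤ N) (x : ZMod N) :
    ht1 N (x + 3) = str N x 1 1 1 σ1 σ1 σ3 1 := by
  unfold ht1 PX PZ
  rw [show x+3+1 = x+4 from by ring, show x+3+2 = x+5 from by ring]
  rw [str_sites N hN x]
  simp only [site_one, one_mul, mul_one]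

lemma hc2_3 (N : ℕ) [NeZero N] (hN : 7 ≤ N) (x : ZMod N) :
    ht2 N (x + 3) = str N x 1 1 1 σ3 σ1 σ1 1 := by
  unfold ht2 PX PZ
  rw [show x+3+1 = x+4 from by ring, show x+3+2 = x+5 from by ring]
  rw [str_sites N hN x]
  simp only [site_one, one_mul, mul_one]

lemma hc1_4 (N : ℕ) [NeZero N] (hN : 7 ≤ N) (x : ZMod N) :
    ht1 N (x + 4) = str N x 1 1 1 1 σ1 σ1 σ3 := by
  unfold ht1 PX PZ
  rw [show x+4+1 = x+5 from by ring, show x+4+2 = x+6 from by ring]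
  rw [str_sites N hN x]
  simp only [site_one, one_mul, mul_one]

lemma hc2_4 (N : ℕ) [NeZero N] (hN : 7 ≤ N) (x : ZMod N) :
    ht2 N (x + 4) = str N x 1 1 1 1 σ3 σ1 σ1 := by
  unfold ht2 PX PZ
  rw [show x+4+1 = x+5 from by ring, show x+4+2 = x+6 from by ring]
  rw [str_sites N hN x]
  simp only [site_one, one_mul, mul_one]

lemma c11_0_a (N : ℕ) [NeZero N] (hN : 7 ≤ N) (x : ZMod N) :
    qt1 N x * ht1 N x = Complex.I • str N x 1 1 σ1 σ1 σ3 1 1 := by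
  rw [qc1_0 N hN x, hc1_0 N hN x, str_mul]
  simp only [m11, m22, m33, m12, m21, m13, m31, m23, m32, one_mul, mul_one]
  rw [ssm2 N hN x]

lemma c11_0_b (N : ℕ) [NeZero N] (hN : 7 ≤ N) (x : ZMod N) :
    ht1 N x * qt1 N x = -(Complex.I • str N x 1 1 σ1 σ1 σ3 1 1) := by
  rw [hc1_0 N hN x, qc1_0 N hN x, str_mul]
  simp only [m11, m22, m33, m12, m21, m13, m31, m23, m32, one_mul, mul_one]
  rw [ssm2 N hN x]
  rw [neg_smul]

lemma c11_1_a (N : ℕ) [NeZero N] (hN : 7 ≤ N) (x : ZMod N) :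
    qt1 N x * ht1 N (x + 1) = -(str N x σ1 1 σ3 σ2 σ3 1 1) := by
  rw [qc1_0 N hN x, hc1_1 N hN x, str_mul]
  simp only [m11, m22, m33, m12, m21, m13, m31, m23, m32, one_mul, mul_one]
  rw [ssm2 N hN x, ssm3 N hN x]
  rw [smul_smul]
  norm_num [Complex.I_mul_I, neg_smul, one_smul]

lemma c11_1_b (N : ℕ) [NeZero N] (hN : 7 ≤ N) (x : ZMod N) :
    ht1 N (x + 1) * qt1 N x = -(str N x σ1 1 σ3 σ2 σ3 1 1) := by
  rw [hc1_1 N hN x, qc1_0 N hN x, str_mul]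
  simp only [m11, m22, m33, m12, m21, m13, m31, m23, m32, one_mul, mul_one]
  rw [ssm2 N hN x, ssm3 N hN x]
  rw [smul_smul]
  norm_num [Complex.I_mul_I, neg_smul, one_smul]

lemma c11_2_a (N : ℕ) [NeZero N] (hN : 7 ≤ N) (x : ZMod N) :
    qt1 N x * ht1 N (x + 2) = -(Complex.I • str N x σ1 σ1 σ3 1 1 1 1) := by
  rw [qc1_0 N hN x, hc1_2 N hN x, str_mul]
  simp only [m11, m22, m33, m12, m21, m13, m31, m23, m32, one_mul, mul_one]
  rw [ssm2 N hN x]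
  rw [neg_smul]

lemma c11_2_b (N : ℕ) [NeZero N] (hN : 7 ≤ N) (x : ZMod N) :
    ht1 N (x + 2) * qt1 N x = Complex.I • str N x σ1 σ1 σ3 1 1 1 1 := by
  rw [hc1_2 N hN x, qc1_0 N hN x, str_mul]
  simp only [m11, m22, m33, m12, m21, m13, m31, m23, m32, one_mul, mul_one]
  rw [ssm2 N hN x]

lemma c11_3_a (N : ℕ) [NeZero N] (hN : 7 ≤ N) (x : ZMod N) :
    qt1 N x * ht1 N (x + 3) = Complex.I • str N x σ1 σ1 σ2 1 σ2 σ3 1 := by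
  rw [qc1_0 N hN x, hc1_3 N hN x, str_mul]
  simp only [m11, m22, m33, m12, m21, m13, m31, m23, m32, one_mul, mul_one]
  rw [ssm4 N hN x]

lemma c11_3_b (N : ℕ) [NeZero N] (hN : 7 ≤ N) (x : ZMod N) :
    ht1 N (x + 3) * qt1 N x = -(Complex.I • str N x σ1 σ1 σ2 1 σ2 σ3 1) := by
  rw [hc1_3 N hN x, qc1_0 N hN x, str_mul]
  simp only [m11, m22, m33, m12, m21, m13, m31, m23, m32, one_mul, mul_one]
  rw [ssm4 N hN x]
  rw [neg_smul]

lemma c11_4_a (N : ℕ) [NeZero N] (hN : 7 ≤ N) (x : ZMod N) :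
    qt1 N x * ht1 N (x + 4) = Complex.I • str N x σ1 σ1 σ2 σ1 σ2 σ1 σ3 := by
  rw [qc1_0 N hN x, hc1_4 N hN x, str_mul]
  simp only [m11, m22, m33, m12, m21, m13, m31, m23, m32, one_mul, mul_one]
  rw [ssm4 N hN x]

lemma c11_4_b (N : ℕ) [NeZero N] (hN : 7 ≤ N) (x : ZMod N) :
    ht1 N (x + 4) * qt1 N x = -(Complex.I • str N x σ1 σ1 σ2 σ1 σ2 σ1 σ3) := by
  rw [hc1_4 N hN x, qc1_0 N hN x, str_mul]
  simp only [m11, m22, m33, m12, m21, m13, m31, m23, m32, one_mul, mul_one]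
  rw [ssm4 N hN x]
  rw [neg_smul]

lemma c11_m1_a (N : ℕ) [NeZero N] (hN : 7 ≤ N) (x : ZMod N) :
    qt1 N (x + 1) * ht1 N x = -(Complex.I • str N x σ1 1 σ2 σ2 σ1 σ3 1) := by
  rw [qc1_1 N hN x, hc1_0 N hN x, str_mul]
  simp only [m11, m22, m33, m12, m21, m13, m31, m23, m32, one_mul, mul_one]
  rw [ssm2 N hN x]
  rw [neg_smul]

lemma c11_m1_b (N : ℕ) [NeZero N] (hN : 7 ≤ N) (x : ZMod N) :
    ht1 N x * qt1 N (x + 1) = Complex.I • str N x σ1 1 σ2 σ2 σ1 σ3 1 := by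
  rw [hc1_0 N hN x, qc1_1 N hN x, str_mul]
  simp only [m11, m22, m33, m12, m21, m13, m31, m23, m32, one_mul, mul_one]
  rw [ssm2 N hN x]

lemma c11_m2_a (N : ℕ) [NeZero N] (hN : 7 ≤ N) (x : ZMod N) :
    qt1 N (x + 2) * ht1 N x = -(Complex.I • str N x σ1 σ1 σ2 σ1 σ2 σ1 σ3) := by
  rw [qc1_2 N hN x, hc1_0 N hN x, str_mul]
  simp only [m11, m22, m33, m12, m21, m13, m31, m23, m32, one_mul, mul_one]
  rw [ssm2 N hN x]
  rw [neg_smul]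

lemma c11_m2_b (N : ℕ) [NeZero N] (hN : 7 ≤ N) (x : ZMod N) :
    ht1 N x * qt1 N (x + 2) = Complex.I • str N x σ1 σ1 σ2 σ1 σ2 σ1 σ3 := by
  rw [hc1_0 N hN x, qc1_2 N hN x, str_mul]
  simp only [m11, m22, m33, m12, m21, m13, m31, m23, m32, one_mul, mul_one]
  rw [ssm2 N hN x]

lemma c12_0_a (N : ℕ) [NeZero N] (hN : 7 ≤ N) (x : ZMod N) :
    qt1 N x * ht2 N x = -(str N x σ2 1 σ3 σ1 σ3 1 1) := by
  rw [qc1_0 N hN x, hc2_0 N hN x, str_mul]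
  simp only [m11, m22, m33, m12, m21, m13, m31, m23, m32, one_mul, mul_one]
  rw [ssm0 N hN x, ssm2 N hN x]
  rw [smul_smul]
  norm_num [Complex.I_mul_I, neg_smul, one_smul]

lemma c12_0_b (N : ℕ) [NeZero N] (hN : 7 ≤ N) (x : ZMod N) :
    ht2 N x * qt1 N x = -(str N x σ2 1 σ3 σ1 σ3 1 1) := by
  rw [hc2_0 N hN x, qc1_0 N hN x, str_mul]
  simp only [m11, m22, m33, m12, m21, m13, m31, m23, m32, one_mul, mul_one]
  rw [ssm0 N hN x, ssm2 N hN x]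
  rw [smul_smul]
  norm_num [Complex.I_mul_I, neg_smul, one_smul]

lemma c12_1_a (N : ℕ) [NeZero N] (hN : 7 ≤ N) (x : ZMod N) :
    qt1 N x * ht2 N (x + 1) = -(str N x σ1 σ2 σ3 1 σ3 1 1) := by
  rw [qc1_0 N hN x, hc2_1 N hN x, str_mul]
  simp only [m11, m22, m33, m12, m21, m13, m31, m23, m32, one_mul, mul_one]
  rw [ssm1 N hN x, ssm2 N hN x]
  rw [smul_smul]
  norm_num [Complex.I_mul_I, neg_smul, one_smul]

lemma c12_1_b (N : ℕ) [NeZero N] (hN : 7 ≤ N) (x : ZMod N) :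
    ht2 N (x + 1) * qt1 N x = -(str N x σ1 σ2 σ3 1 σ3 1 1) := by
  rw [hc2_1 N hN x, qc1_0 N hN x, str_mul]
  simp only [m11, m22, m33, m12, m21, m13, m31, m23, m32, one_mul, mul_one]
  rw [ssm1 N hN x, ssm2 N hN x]
  rw [smul_smul]
  norm_num [Complex.I_mul_I, neg_smul, one_smul]

lemma c12_2_a (N : ℕ) [NeZero N] (hN : 7 ≤ N) (x : ZMod N) :
    qt1 N x * ht2 N (x + 2) = -(str N x σ1 σ1 σ1 1 σ2 1 1) := by
  rw [qc1_0 N hN x, hc2_2 N hN x, str_mul]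
  simp only [m11, m22, m33, m12, m21, m13, m31, m23, m32, one_mul, mul_one]
  rw [ssm2 N hN x, ssm4 N hN x]
  rw [smul_smul]
  norm_num [Complex.I_mul_I, neg_smul, one_smul]

lemma c12_2_b (N : ℕ) [NeZero N] (hN : 7 ≤ N) (x : ZMod N) :
    ht2 N (x + 2) * qt1 N x = -(str N x σ1 σ1 σ1 1 σ2 1 1) := by
  rw [hc2_2 N hN x, qc1_0 N hN x, str_mul]
  simp only [m11, m22, m33, m12, m21, m13, m31, m23, m32, one_mul, mul_one]
  rw [ssm2 N hN x, ssm4 N hN x]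
  rw [smul_smul]
  norm_num [Complex.I_mul_I, neg_smul, one_smul]

lemma c12_3_a (N : ℕ) [NeZero N] (hN : 7 ≤ N) (x : ZMod N) :
    qt1 N x * ht2 N (x + 3) = str N x σ1 σ1 σ2 σ2 σ2 σ1 1 := by
  rw [qc1_0 N hN x, hc2_3 N hN x, str_mul]
  simp only [m11, m22, m33, m12, m21, m13, m31, m23, m32, one_mul, mul_one]
  rw [ssm3 N hN x, ssm4 N hN x]
  rw [smul_smul]
  norm_num [Complex.I_mul_I, neg_smul, one_smul]

lemma c12_3_b (N : ℕ) [NeZero N] (hN : 7 ≤ N) (x : ZMod N) :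
    ht2 N (x + 3) * qt1 N x = str N x σ1 σ1 σ2 σ2 σ2 σ1 1 := by
  rw [hc2_3 N hN x, qc1_0 N hN x, str_mul]
  simp only [m11, m22, m33, m12, m21, m13, m31, m23, m32, one_mul, mul_one]
  rw [ssm3 N hN x, ssm4 N hN x]
  rw [smul_smul]
  norm_num [Complex.I_mul_I, neg_smul, one_smul]

lemma c12_4_a (N : ℕ) [NeZero N] (hN : 7 ≤ N) (x : ZMod N) :
    qt1 N x * ht2 N (x + 4) = str N x σ1 σ1 σ2 σ1 1 σ1 σ1 := by
  rw [qc1_0 N hN x, hc2_4 N hN x, str_mul]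
  simp only [m11, m22, m33, m12, m21, m13, m31, m23, m32, one_mul, mul_one]

lemma c12_4_b (N : ℕ) [NeZero N] (hN : 7 ≤ N) (x : ZMod N) :
    ht2 N (x + 4) * qt1 N x = str N x σ1 σ1 σ2 σ1 1 σ1 σ1 := by
  rw [hc2_4 N hN x, qc1_0 N hN x, str_mul]
  simp only [m11, m22, m33, m12, m21, m13, m31, m23, m32, one_mul, mul_one]

lemma c12_m1_a (N : ℕ) [NeZero N] (hN : 7 ≤ N) (x : ZMod N) :
    qt1 N (x + 1) * ht2 N x = str N x σ3 1 1 σ2 σ1 σ3 1 := by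
  rw [qc1_1 N hN x, hc2_0 N hN x, str_mul]
  simp only [m11, m22, m33, m12, m21, m13, m31, m23, m32, one_mul, mul_one]

lemma c12_m1_b (N : ℕ) [NeZero N] (hN : 7 ≤ N) (x : ZMod N) :
    ht2 N x * qt1 N (x + 1) = str N x σ3 1 1 σ2 σ1 σ3 1 := by
  rw [hc2_0 N hN x, qc1_1 N hN x, str_mul]
  simp only [m11, m22, m33, m12, m21, m13, m31, m23, m32, one_mul, mul_one]

lemma c12_m2_a (N : ℕ) [NeZero N] (hN : 7 ≤ N) (x : ZMod N) :
    qt1 N (x + 2) * ht2 N x = str N x σ3 σ1 1 σ1 σ2 σ1 σ3 := by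
  rw [qc1_2 N hN x, hc2_0 N hN x, str_mul]
  simp only [m11, m22, m33, m12, m21, m13, m31, m23, m32, one_mul, mul_one]

lemma c12_m2_b (N : ℕ) [NeZero N] (hN : 7 ≤ N) (x : ZMod N) :
    ht2 N x * qt1 N (x + 2) = str N x σ3 σ1 1 σ1 σ2 σ1 σ3 := by
  rw [hc2_0 N hN x, qc1_2 N hN x, str_mul]
  simp only [m11, m22, m33, m12, m21, m13, m31, m23, m32, one_mul, mul_one]

lemma c21_0_a (N : ℕ) [NeZero N] (hN : 7 ≤ N) (x : ZMod N) :
    qt2 N x * ht1 N x = Complex.I • str N x 1 σ1 σ1 σ3 1 1 1 := by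
  rw [qc2_0 N hN x, hc1_0 N hN x, str_mul]
  simp only [m11, m22, m33, m12, m21, m13, m31, m23, m32, one_mul, mul_one]
  rw [ssm2 N hN x]

lemma c21_0_b (N : ℕ) [NeZero N] (hN : 7 ≤ N) (x : ZMod N) :
    ht1 N x * qt2 N x = -(Complex.I • str N x 1 σ1 σ1 σ3 1 1 1) := by
  rw [hc1_0 N hN x, qc2_0 N hN x, str_mul]
  simp only [m11, m22, m33, m12, m21, m13, m31, m23, m32, one_mul, mul_one]
  rw [ssm2 N hN x]
  rw [neg_smul]

lemma c21_1_a (N : ℕ) [NeZero N] (hN : 7 ≤ N) (x : ZMod N) :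
    qt2 N x * ht1 N (x + 1) = -(Complex.I • str N x σ1 σ1 σ3 1 1 1 1) := by
  rw [qc2_0 N hN x, hc1_1 N hN x, str_mul]
  simp only [m11, m22, m33, m12, m21, m13, m31, m23, m32, one_mul, mul_one]
  rw [ssm2 N hN x]
  rw [neg_smul]

lemma c21_1_b (N : ℕ) [NeZero N] (hN : 7 ≤ N) (x : ZMod N) :
    ht1 N (x + 1) * qt2 N x = Complex.I • str N x σ1 σ1 σ3 1 1 1 1 := by
  rw [hc1_1 N hN x, qc2_0 N hN x, str_mul]
  simp only [m11, m22, m33, m12, m21, m13, m31, m23, m32, one_mul, mul_one]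
  rw [ssm2 N hN x]

lemma c21_2_a (N : ℕ) [NeZero N] (hN : 7 ≤ N) (x : ZMod N) :
    qt2 N x * ht1 N (x + 2) = str N x σ1 1 σ3 σ2 σ3 1 1 := by
  rw [qc2_0 N hN x, hc1_2 N hN x, str_mul]
  simp only [m11, m22, m33, m12, m21, m13, m31, m23, m32, one_mul, mul_one]
  rw [ssm2 N hN x, ssm3 N hN x]
  rw [smul_smul]
  norm_num [Complex.I_mul_I, neg_smul, one_smul]

lemma c21_2_b (N : ℕ) [NeZero N] (hN : 7 ≤ N) (x : ZMod N) :
    ht1 N (x + 2) * qt2 N x = str N x σ1 1 σ3 σ2 σ3 1 1 := by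
  rw [hc1_2 N hN x, qc2_0 N hN x, str_mul]
  simp only [m11, m22, m33, m12, m21, m13, m31, m23, m32, one_mul, mul_one]
  rw [ssm2 N hN x, ssm3 N hN x]
  rw [smul_smul]
  norm_num [Complex.I_mul_I, neg_smul, one_smul]

lemma c21_3_a (N : ℕ) [NeZero N] (hN : 7 ≤ N) (x : ZMod N) :
    qt2 N x * ht1 N (x + 3) = Complex.I • str N x σ1 1 σ2 σ2 σ1 σ3 1 := by
  rw [qc2_0 N hN x, hc1_3 N hN x, str_mul]
  simp only [m11, m22, m33, m12, m21, m13, m31, m23, m32, one_mul, mul_one]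
  rw [ssm3 N hN x]

lemma c21_3_b (N : ℕ) [NeZero N] (hN : 7 ≤ N) (x : ZMod N) :
    ht1 N (x + 3) * qt2 N x = -(Complex.I • str N x σ1 1 σ2 σ2 σ1 σ3 1) := by
  rw [hc1_3 N hN x, qc2_0 N hN x, str_mul]
  simp only [m11, m22, m33, m12, m21, m13, m31, m23, m32, one_mul, mul_one]
  rw [ssm3 N hN x]
  rw [neg_smul]

lemma c21_4_a (N : ℕ) [NeZero N] (hN : 7 ≤ N) (x : ZMod N) :
    qt2 N x * ht1 N (x + 4) = str N x σ1 1 σ2 σ3 σ1 σ1 σ3 := by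
  rw [qc2_0 N hN x, hc1_4 N hN x, str_mul]
  simp only [m11, m22, m33, m12, m21, m13, m31, m23, m32, one_mul, mul_one]

lemma c21_4_b (N : ℕ) [NeZero N] (hN : 7 ≤ N) (x : ZMod N) :
    ht1 N (x + 4) * qt2 N x = str N x σ1 1 σ2 σ3 σ1 σ1 σ3 := by
  rw [hc1_4 N hN x, qc2_0 N hN x, str_mul]
  simp only [m11, m22, m33, m12, m21, m13, m31, m23, m32, one_mul, mul_one]

lemma c21_m1_a (N : ℕ) [NeZero N] (hN : 7 ≤ N) (x : ZMod N) :
    qt2 N (x + 1) * ht1 N x = str N x σ1 1 σ3 σ2 σ3 1 1 := by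
  rw [qc2_1 N hN x, hc1_0 N hN x, str_mul]
  simp only [m11, m22, m33, m12, m21, m13, m31, m23, m32, one_mul, mul_one]

lemma c21_m1_b (N : ℕ) [NeZero N] (hN : 7 ≤ N) (x : ZMod N) :
    ht1 N x * qt2 N (x + 1) = str N x σ1 1 σ3 σ2 σ3 1 1 := by
  rw [hc1_0 N hN x, qc2_1 N hN x, str_mul]
  simp only [m11, m22, m33, m12, m21, m13, m31, m23, m32, one_mul, mul_one]

lemma c21_m2_a (N : ℕ) [NeZero N] (hN : 7 ≤ N) (x : ZMod N) :
    qt2 N (x + 2) * ht1 N x = -(Complex.I • str N x σ1 σ1 σ2 1 σ2 σ3 1) := by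
  rw [qc2_2 N hN x, hc1_0 N hN x, str_mul]
  simp only [m11, m22, m33, m12, m21, m13, m31, m23, m32, one_mul, mul_one]
  rw [ssm2 N hN x]
  rw [neg_smul]

lemma c21_m2_b (N : ℕ) [NeZero N] (hN : 7 ≤ N) (x : ZMod N) :
    ht1 N x * qt2 N (x + 2) = Complex.I • str N x σ1 σ1 σ2 1 σ2 σ3 1 := by
  rw [hc1_0 N hN x, qc2_2 N hN x, str_mul]
  simp only [m11, m22, m33, m12, m21, m13, m31, m23, m32, one_mul, mul_one]
  rw [ssm2 N hN x]

lemma c22_0_a (N : ℕ) [NeZero N] (hN : 7 ≤ N) (x : ZMod N) :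
    qt2 N x * ht2 N x = -(str N x σ2 σ1 σ3 σ3 1 1 1) := by
  rw [qc2_0 N hN x, hc2_0 N hN x, str_mul]
  simp only [m11, m22, m33, m12, m21, m13, m31, m23, m32, one_mul, mul_one]
  rw [ssm0 N hN x, ssm2 N hN x]
  rw [smul_smul]
  norm_num [Complex.I_mul_I, neg_smul, one_smul]

lemma c22_0_b (N : ℕ) [NeZero N] (hN : 7 ≤ N) (x : ZMod N) :
    ht2 N x * qt2 N x = -(str N x σ2 σ1 σ3 σ3 1 1 1) := by
  rw [hc2_0 N hN x, qc2_0 N hN x, str_mul]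
  simp only [m11, m22, m33, m12, m21, m13, m31, m23, m32, one_mul, mul_one]
  rw [ssm0 N hN x, ssm2 N hN x]
  rw [smul_smul]
  norm_num [Complex.I_mul_I, neg_smul, one_smul]

lemma c22_1_a (N : ℕ) [NeZero N] (hN : 7 ≤ N) (x : ZMod N) :
    qt2 N x * ht2 N (x + 1) = str N x σ1 σ3 σ3 σ2 1 1 1 := by
  rw [qc2_0 N hN x, hc2_1 N hN x, str_mul]
  simp only [m11, m22, m33, m12, m21, m13, m31, m23, m32, one_mul, mul_one]
  rw [ssm2 N hN x, ssm3 N hN x]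
  rw [smul_smul]
  norm_num [Complex.I_mul_I, neg_smul, one_smul]

lemma c22_1_b (N : ℕ) [NeZero N] (hN : 7 ≤ N) (x : ZMod N) :
    ht2 N (x + 1) * qt2 N x = str N x σ1 σ3 σ3 σ2 1 1 1 := by
  rw [hc2_1 N hN x, qc2_0 N hN x, str_mul]
  simp only [m11, m22, m33, m12, m21, m13, m31, m23, m32, one_mul, mul_one]
  rw [ssm2 N hN x, ssm3 N hN x]
  rw [smul_smul]
  norm_num [Complex.I_mul_I, neg_smul, one_smul]

lemma c22_2_a (N : ℕ) [NeZero N] (hN : 7 ≤ N) (x : ZMod N) :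
    qt2 N x * ht2 N (x + 2) = -(str N x σ1 1 σ1 σ2 σ1 1 1) := by
  rw [qc2_0 N hN x, hc2_2 N hN x, str_mul]
  simp only [m11, m22, m33, m12, m21, m13, m31, m23, m32, one_mul, mul_one]
  rw [ssm2 N hN x, ssm3 N hN x]
  rw [smul_smul]
  norm_num [Complex.I_mul_I, neg_smul, one_smul]

lemma c22_2_b (N : ℕ) [NeZero N] (hN : 7 ≤ N) (x : ZMod N) :
    ht2 N (x + 2) * qt2 N x = -(str N x σ1 1 σ1 σ2 σ1 1 1) := by
  rw [hc2_2 N hN x, qc2_0 N hN x, str_mul]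
  simp only [m11, m22, m33, m12, m21, m13, m31, m23, m32, one_mul, mul_one]
  rw [ssm2 N hN x, ssm3 N hN x]
  rw [smul_smul]
  norm_num [Complex.I_mul_I, neg_smul, one_smul]

lemma c22_3_a (N : ℕ) [NeZero N] (hN : 7 ≤ N) (x : ZMod N) :
    qt2 N x * ht2 N (x + 3) = str N x σ1 1 σ2 1 σ1 σ1 1 := by
  rw [qc2_0 N hN x, hc2_3 N hN x, str_mul]
  simp only [m11, m22, m33, m12, m21, m13, m31, m23, m32, one_mul, mul_one]

lemma c22_3_b (N : ℕ) [NeZero N] (hN : 7 ≤ N) (x : ZMod N) :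
    ht2 N (x + 3) * qt2 N x = str N x σ1 1 σ2 1 σ1 σ1 1 := by
  rw [hc2_3 N hN x, qc2_0 N hN x, str_mul]
  simp only [m11, m22, m33, m12, m21, m13, m31, m23, m32, one_mul, mul_one]

lemma c22_4_a (N : ℕ) [NeZero N] (hN : 7 ≤ N) (x : ZMod N) :
    qt2 N x * ht2 N (x + 4) = str N x σ1 1 σ2 σ3 σ3 σ1 σ1 := by
  rw [qc2_0 N hN x, hc2_4 N hN x, str_mul]
  simp only [m11, m22, m33, m12, m21, m13, m31, m23, m32, one_mul, mul_one]

lemma c22_4_b (N : ℕ) [NeZero N] (hN : 7 ≤ N) (x : ZMod N) :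
    ht2 N (x + 4) * qt2 N x = str N x σ1 1 σ2 σ3 σ3 σ1 σ1 := by
  rw [hc2_4 N hN x, qc2_0 N hN x, str_mul]
  simp only [m11, m22, m33, m12, m21, m13, m31, m23, m32, one_mul, mul_one]

lemma c22_m1_a (N : ℕ) [NeZero N] (hN : 7 ≤ N) (x : ZMod N) :
    qt2 N (x + 1) * ht2 N x = str N x σ3 1 σ1 σ2 σ3 1 1 := by
  rw [qc2_1 N hN x, hc2_0 N hN x, str_mul]
  simp only [m11, m22, m33, m12, m21, m13, m31, m23, m32, one_mul, mul_one]

lemma c22_m1_b (N : ℕ) [NeZero N] (hN : 7 ≤ N) (x : ZMod N) :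
    ht2 N x * qt2 N (x + 1) = str N x σ3 1 σ1 σ2 σ3 1 1 := by
  rw [hc2_0 N hN x, qc2_1 N hN x, str_mul]
  simp only [m11, m22, m33, m12, m21, m13, m31, m23, m32, one_mul, mul_one]

lemma c22_m2_a (N : ℕ) [NeZero N] (hN : 7 ≤ N) (x : ZMod N) :
    qt2 N (x + 2) * ht2 N x = str N x σ3 σ1 1 1 σ2 σ3 1 := by
  rw [qc2_2 N hN x, hc2_0 N hN x, str_mul]
  simp only [m11, m22, m33, m12, m21, m13, m31, m23, m32, one_mul, mul_one]

lemma c22_m2_b (N : ℕ) [NeZero N] (hN : 7 ≤ N) (x : ZMod N) :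
    ht2 N x * qt2 N (x + 2) = str N x σ3 σ1 1 1 σ2 σ3 1 := by
  rw [hc2_0 N hN x, qc2_2 N hN x, str_mul]
  simp only [m11, m22, m33, m12, m21, m13, m31, m23, m32, one_mul, mul_one]

def cmt (N : ℕ) [NeZero N] (d : ZMod N) : Matrix (Fin N → Fin 2) (Fin N → Fin 2) ℂ :=
  ∑ x : ZMod N, (qsum N x * hsum N (x + d) - hsum N (x + d) * qsum N x)

lemma cmt_generic (N : ℕ) [NeZero N] (hN : 7 ≤ N) {d : ZMod N} (h0 : d ≠ 0) (h1 : d ≠ 1)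
    (h2 : d ≠ 2) (h3 : d ≠ 3) (h4 : d ≠ 4) (h5 : d ≠ -1) (h6 : d ≠ -2) : cmt N d = 0 := by
  unfold cmt
  apply Finset.sum_eq_zero
  intro x _
  rw [sub_eq_zero]
  have c00 : x.val ≠ (x + d).val := by
    apply vne; intro hq; exact h0 (by linear_combination -hq)
  have c01 : x.val ≠ (x + d + 1).val := by
    apply vne; intro hq; exact h5 (by linear_combination -hq)
  have c02 : x.val ≠ (x + d + 2).val := by
    apply vne; intro hq; exact h6 (by linear_combination -hq)
  have c10 : (x + 1).val ≠ (x + d).val := by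
    apply vne; intro hq; exact h1 (by linear_combination -hq)
  have c11 : (x + 1).val ≠ (x + d + 1).val := by
    apply vne; intro hq; exact h0 (by linear_combination -hq)
  have c12 : (x + 1).val ≠ (x + d + 2).val := by
    apply vne; intro hq; exact h5 (by linear_combination -hq)
  have c20 : (x + 2).val ≠ (x + d).val := by
    apply vne; intro hq; exact h2 (by linear_combination -hq)
  have c21 : (x + 2).val ≠ (x + d + 1).val := by
    apply vne; intro hq; exact h1 (by linear_combination -hq)
  have c22 : (x + 2).val ≠ (x + d + 2).val := by
    apply vne; intro hq; exact h0 (by linear_combination -hq)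
  have c30 : (x + 3).val ≠ (x + d).val := by
    apply vne; intro hq; exact h3 (by linear_combination -hq)
  have c31 : (x + 3).val ≠ (x + d + 1).val := by
    apply vne; intro hq; exact h2 (by linear_combination -hq)
  have c32 : (x + 3).val ≠ (x + d + 2).val := by
    apply vne; intro hq; exact h1 (by linear_combination -hq)
  have c40 : (x + 4).val ≠ (x + d).val := by
    apply vne; intro hq; exact h4 (by linear_combination -hq)
  have c41 : (x + 4).val ≠ (x + d + 1).val := by
    apply vne; intro hq; exact h3 (by linear_combination -hq)
  have c42 : (x + 4).val ≠ (x + d + 2).val := by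
    apply vne; intro hq; exact h2 (by linear_combination -hq)
  unfold qsum hsum qt1 qt2 ht1 ht2 PX PY PZ
  exact ((((((((((site_comm c00 σ1 σ1).mul_right (site_comm c01 σ1 σ1)).mul_right (site_comm c02 σ1 σ3)).mul_left (((site_comm c10 σ1 σ1).mul_right (site_comm c11 σ1 σ1)).mul_right (site_comm c12 σ1 σ3))).mul_left (((site_comm c20 σ2 σ1).mul_right (site_comm c21 σ2 σ1)).mul_right (site_comm c22 σ2 σ3))).mul_left (((site_comm c30 σ1 σ1).mul_right (site_comm c31 σ1 σ1)).mul_right (site_comm c32 σ1 σ3))).mul_left (((site_comm c40 σ3 σ1).mul_right (site_comm c41 σ3 σ1)).mul_right (site_comm c42 σ3 σ3))).add_right (((((((site_comm c00 σ1 σ3).mul_right (site_comm c01 σ1 σ1)).mul_right (site_comm c02 σ1 σ1)).mul_left (((site_comm c10 σ1 σ3).mul_right (site_comm c11 σ1 σ1)).mul_right (site_comm c12 σ1 σ1))).mul_left (((site_comm c20 σ2 σ3).mul_right (site_comm c21 σ2 σ1)).mul_right (site_comm c22 σ2 σ1))).mul_left (((site_comm c30 σ1 σ3).mul_right (site_comm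 c31 σ1 σ1)).mul_right (site_comm c32 σ1 σ1))).mul_left (((site_comm c40 σ3 σ3).mul_right (site_comm c41 σ3 σ1)).mul_right (site_comm c42 σ3 σ1)))).add_left ((((((site_comm c00 σ1 σ1).mul_right (site_comm c01 σ1 σ1)).mul_right (site_comm c02 σ1 σ3)).mul_left (((site_comm c20 σ2 σ1).mul_right (site_comm c21 σ2 σ1)).mul_right (site_comm c22 σ2 σ3))).mul_left (((site_comm c30 σ3 σ1).mul_right (site_comm c31 σ3 σ1)).mul_right (site_comm c32 σ3 σ3))).add_right (((((site_comm c00 σ1 σ3).mul_right (site_comm c01 σ1 σ1)).mul_right (site_comm c02 σ1 σ1)).mul_left (((site_comm c20 σ2 σ3).mul_right (site_comm c21 σ2 σ1)).mul_right (site_comm c22 σ2 σ1))).mul_left (((site_comm c30 σ3 σ3).mul_right (site_comm c31 σ3 σ1)).mul_right (site_comm c32 σ3 σ1)))))).eq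

lemma cmtL_0 (N : ℕ) [NeZero N] (hN : 7 ≤ N) :
    cmt N 0 = (4 : ℤ) • (Complex.I • (∑ x : ZMod N, str N x σ1 σ1 σ3 1 1 1 1)) := by
  unfold cmt qsum hsum
  have h2 : (∑ x : ZMod N, ((qt1 N x + qt2 N x) * (ht1 N (x + 0) + ht2 N (x + 0)) - (ht1 N (x + 0) + ht2 N (x + 0)) * (qt1 N x + qt2 N x))) = ∑ x : ZMod N, ((Complex.I • str N x 1 1 σ1 σ1 σ3 1 1 + -(str N x σ2 1 σ3 σ1 σ3 1 1) + Complex.I • str N x 1 σ1 σ1 σ3 1 1 1 + -(str N x σ2 σ1 σ3 σ3 1 1 1)) - (-(Complex.I • str N x 1 1 σ1 σ1 σ3 1 1) + -(str N x σ2 1 σ3 σ1 σ3 1 1) + -(Complex.I • str N x 1 σ1 σ1 σ3 1 1 1) + -(str N x σ2 σ1 σ3 σ3 1 1 1))) := by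
    refine Finset.sum_congr rfl (fun x _ => ?_)
    simp only [add_zero]
    simp only [mul_add, add_mul]
    rw [c11_0_a N hN x, c11_0_b N hN x, c12_0_a N hN x, c12_0_b N hN x, c21_0_a N hN x, c21_0_b N hN x, c22_0_a N hN x, c22_0_b N hN x]
    abel
  rw [h2]
  simp only [Finset.sum_add_distrib, Finset.sum_sub_distrib, Finset.sum_neg_distrib,
    ← Finset.smul_sum]
  rw [sstr1 N hN 1 σ1 σ1 σ3 1 1]
  rw [sstr1 N hN σ1 σ1 σ3 1 1 1]
  abel

lemma cmtL_1 (N : ℕ) [NeZero N] (hN : 7 ≤ N) :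
    cmt N 1 = (-2 : ℤ) • (Complex.I • (∑ x : ZMod N, str N x σ1 σ1 σ3 1 1 1 1)) := by
  unfold cmt qsum hsum
  have h2 : (∑ x : ZMod N, ((qt1 N x + qt2 N x) * (ht1 N (x + 1) + ht2 N (x + 1)) - (ht1 N (x + 1) + ht2 N (x + 1)) * (qt1 N x + qt2 N x))) = ∑ x : ZMod N, ((-(str N x σ1 1 σ3 σ2 σ3 1 1) + -(str N x σ1 σ2 σ3 1 σ3 1 1) + -(Complex.I • str N x σ1 σ1 σ3 1 1 1 1) + str N x σ1 σ3 σ3 σ2 1 1 1) - (-(str N x σ1 1 σ3 σ2 σ3 1 1) + -(str N x σ1 σ2 σ3 1 σ3 1 1) + Complex.I • str N x σ1 σ1 σ3 1 1 1 1 + str N x σ1 σ3 σ3 σ2 1 1 1)) := by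
    refine Finset.sum_congr rfl (fun x _ => ?_)
    simp only [mul_add, add_mul]
    rw [c11_1_a N hN x, c11_1_b N hN x, c12_1_a N hN x, c12_1_b N hN x, c21_1_a N hN x, c21_1_b N hN x, c22_1_a N hN x, c22_1_b N hN x]
    abel
  rw [h2]
  simp only [Finset.sum_add_distrib, Finset.sum_sub_distrib, Finset.sum_neg_distrib,
    ← Finset.smul_sum]
  abel

lemma cmtL_2 (N : ℕ) [NeZero N] (hN : 7 ≤ N) :
    cmt N 2 = (-2 : ℤ) • (Complex.I • (∑ x : ZMod N, str N x σ1 σ1 σ3 1 1 1 1)) := by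
  unfold cmt qsum hsum
  have h2 : (∑ x : ZMod N, ((qt1 N x + qt2 N x) * (ht1 N (x + 2) + ht2 N (x + 2)) - (ht1 N (x + 2) + ht2 N (x + 2)) * (qt1 N x + qt2 N x))) = ∑ x : ZMod N, ((-(Complex.I • str N x σ1 σ1 σ3 1 1 1 1) + -(str N x σ1 σ1 σ1 1 σ2 1 1) + str N x σ1 1 σ3 σ2 σ3 1 1 + -(str N x σ1 1 σ1 σ2 σ1 1 1)) - (Complex.I • str N x σ1 σ1 σ3 1 1 1 1 + -(str N x σ1 σ1 σ1 1 σ2 1 1) + str N x σ1 1 σ3 σ2 σ3 1 1 + -(str N x σ1 1 σ1 σ2 σ1 1 1))) := by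
    refine Finset.sum_congr rfl (fun x _ => ?_)
    simp only [mul_add, add_mul]
    rw [c11_2_a N hN x, c11_2_b N hN x, c12_2_a N hN x, c12_2_b N hN x, c21_2_a N hN x, c21_2_b N hN x, c22_2_a N hN x, c22_2_b N hN x]
    abel
  rw [h2]
  simp only [Finset.sum_add_distrib, Finset.sum_sub_distrib, Finset.sum_neg_distrib,
    ← Finset.smul_sum]
  abel

lemma cmtL_3 (N : ℕ) [NeZero N] (hN : 7 ≤ N) :
    cmt N 3 = (2 : ℤ) • (Complex.I • (∑ x : ZMod N, str N x σ1 1 σ2 σ2 σ1 σ3 1)) + (2 : ℤ) • (Complex.I • (∑ x : ZMod N, str N x σ1 σ1 σ2 1 σ2 σ3 1)) := by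
  unfold cmt qsum hsum
  have h2 : (∑ x : ZMod N, ((qt1 N x + qt2 N x) * (ht1 N (x + 3) + ht2 N (x + 3)) - (ht1 N (x + 3) + ht2 N (x + 3)) * (qt1 N x + qt2 N x))) = ∑ x : ZMod N, ((Complex.I • str N x σ1 σ1 σ2 1 σ2 σ3 1 + str N x σ1 σ1 σ2 σ2 σ2 σ1 1 + Complex.I • str N x σ1 1 σ2 σ2 σ1 σ3 1 + str N x σ1 1 σ2 1 σ1 σ1 1) - (-(Complex.I • str N x σ1 σ1 σ2 1 σ2 σ3 1) + str N x σ1 σ1 σ2 σ2 σ2 σ1 1 + -(Complex.I • str N x σ1 1 σ2 σ2 σ1 σ3 1) + str N x σ1 1 σ2 1 σ1 σ1 1)) := by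
    refine Finset.sum_congr rfl (fun x _ => ?_)
    simp only [mul_add, add_mul]
    rw [c11_3_a N hN x, c11_3_b N hN x, c12_3_a N hN x, c12_3_b N hN x, c21_3_a N hN x, c21_3_b N hN x, c22_3_a N hN x, c22_3_b N hN x]
    abel
  rw [h2]
  simp only [Finset.sum_add_distrib, Finset.sum_sub_distrib, Finset.sum_neg_distrib,
    ← Finset.smul_sum]
  abel

lemma cmtL_4 (N : ℕ) [NeZero N] (hN : 7 ≤ N) :
    cmt N 4 = (2 : ℤ) • (Complex.I • (∑ x : ZMod N, str N x σ1 σ1 σ2 σ1 σ2 σ1 σ3)) := by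
  unfold cmt qsum hsum
  have h2 : (∑ x : ZMod N, ((qt1 N x + qt2 N x) * (ht1 N (x + 4) + ht2 N (x + 4)) - (ht1 N (x + 4) + ht2 N (x + 4)) * (qt1 N x + qt2 N x))) = ∑ x : ZMod N, ((Complex.I • str N x σ1 σ1 σ2 σ1 σ2 σ1 σ3 + str N x σ1 σ1 σ2 σ1 1 σ1 σ1 + str N x σ1 1 σ2 σ3 σ1 σ1 σ3 + str N x σ1 1 σ2 σ3 σ3 σ1 σ1) - (-(Complex.I • str N x σ1 σ1 σ2 σ1 σ2 σ1 σ3) + str N x σ1 σ1 σ2 σ1 1 σ1 σ1 + str N x σ1 1 σ2 σ3 σ1 σ1 σ3 + str N x σ1 1 σ2 σ3 σ3 σ1 σ1)) := by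
    refine Finset.sum_congr rfl (fun x _ => ?_)
    simp only [mul_add, add_mul]
    rw [c11_4_a N hN x, c11_4_b N hN x, c12_4_a N hN x, c12_4_b N hN x, c21_4_a N hN x, c21_4_b N hN x, c22_4_a N hN x, c22_4_b N hN x]
    abel
  rw [h2]
  simp only [Finset.sum_add_distrib, Finset.sum_sub_distrib, Finset.sum_neg_distrib,
    ← Finset.smul_sum]
  abel

lemma cmtL_m1 (N : ℕ) [NeZero N] (hN : 7 ≤ N) :
    cmt N (-1) = (-2 : ℤ) • (Complex.I • (∑ x : ZMod N, str N x σ1 1 σ2 σ2 σ1 σ3 1)) := by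
  unfold cmt qsum hsum
  have hre : (∑ x : ZMod N, ((qt1 N x + qt2 N x) * (ht1 N (x + -1) + ht2 N (x + -1)) - (ht1 N (x + -1) + ht2 N (x + -1)) * (qt1 N x + qt2 N x))) = ∑ x : ZMod N, ((qt1 N (x + 1) + qt2 N (x + 1)) * (ht1 N (x + 1 + -1) + ht2 N (x + 1 + -1)) - (ht1 N (x + 1 + -1) + ht2 N (x + 1 + -1)) * (qt1 N (x + 1) + qt2 N (x + 1))) :=
    (sum_shift (1 : ZMod N) (fun x => ((qt1 N x + qt2 N x) * (ht1 N (x + -1) + ht2 N (x + -1)) - (ht1 N (x + -1) + ht2 N (x + -1)) * (qt1 N x + qt2 N x)))).symm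
  rw [hre]
  have h2 : (∑ x : ZMod N, ((qt1 N (x + 1) + qt2 N (x + 1)) * (ht1 N (x + 1 + -1) + ht2 N (x + 1 + -1)) - (ht1 N (x + 1 + -1) + ht2 N (x + 1 + -1)) * (qt1 N (x + 1) + qt2 N (x + 1)))) = ∑ x : ZMod N, ((-(Complex.I • str N x σ1 1 σ2 σ2 σ1 σ3 1) + str N x σ3 1 1 σ2 σ1 σ3 1 + str N x σ1 1 σ3 σ2 σ3 1 1 + str N x σ3 1 σ1 σ2 σ3 1 1) - (Complex.I • str N x σ1 1 σ2 σ2 σ1 σ3 1 + str N x σ3 1 1 σ2 σ1 σ3 1 + str N x σ1 1 σ3 σ2 σ3 1 1 + str N x σ3 1 σ1 σ2 σ3 1 1)) := by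
    refine Finset.sum_congr rfl (fun x _ => ?_)
    rw [add_neg_cancel_right]
    simp only [mul_add, add_mul]
    rw [c11_m1_a N hN x, c11_m1_b N hN x, c12_m1_a N hN x, c12_m1_b N hN x, c21_m1_a N hN x, c21_m1_b N hN x, c22_m1_a N hN x, c22_m1_b N hN x]
    abel
  rw [h2]
  simp only [Finset.sum_add_distrib, Finset.sum_sub_distrib, Finset.sum_neg_distrib,
    ← Finset.smul_sum]
  abel

lemma cmtL_m2 (N : ℕ) [NeZero N] (hN : 7 ≤ N) :
    cmt N (-2) = (-2 : ℤ) • (Complex.I • (∑ x : ZMod N, str N x σ1 σ1 σ2 1 σ2 σ3 1)) + (-2 : ℤ) • (Complex.I • (∑ x : ZMod N, str N x σ1 σ1 σ2 σ1 σ2 σ1 σ3)) := by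
  unfold cmt qsum hsum
  have hre : (∑ x : ZMod N, ((qt1 N x + qt2 N x) * (ht1 N (x + -2) + ht2 N (x + -2)) - (ht1 N (x + -2) + ht2 N (x + -2)) * (qt1 N x + qt2 N x))) = ∑ x : ZMod N, ((qt1 N (x + 2) + qt2 N (x + 2)) * (ht1 N (x + 2 + -2) + ht2 N (x + 2 + -2)) - (ht1 N (x + 2 + -2) + ht2 N (x + 2 + -2)) * (qt1 N (x + 2) + qt2 N (x + 2))) :=
    (sum_shift (2 : ZMod N) (fun x => ((qt1 N x + qt2 N x) * (ht1 N (x + -2) + ht2 N (x + -2)) - (ht1 N (x + -2) + ht2 N (x + -2)) * (qt1 N x + qt2 N x)))).symm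
  rw [hre]
  have h2 : (∑ x : ZMod N, ((qt1 N (x + 2) + qt2 N (x + 2)) * (ht1 N (x + 2 + -2) + ht2 N (x + 2 + -2)) - (ht1 N (x + 2 + -2) + ht2 N (x + 2 + -2)) * (qt1 N (x + 2) + qt2 N (x + 2)))) = ∑ x : ZMod N, ((-(Complex.I • str N x σ1 σ1 σ2 σ1 σ2 σ1 σ3) + str N x σ3 σ1 1 σ1 σ2 σ1 σ3 + -(Complex.I • str N x σ1 σ1 σ2 1 σ2 σ3 1) + str N x σ3 σ1 1 1 σ2 σ3 1) - (Complex.I • str N x σ1 σ1 σ2 σ1 σ2 σ1 σ3 + str N x σ3 σ1 1 σ1 σ2 σ1 σ3 + Complex.I • str N x σ1 σ1 σ2 1 σ2 σ3 1 + str N x σ3 σ1 1 1 σ2 σ3 1)) := by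
    refine Finset.sum_congr rfl (fun x _ => ?_)
    rw [add_neg_cancel_right]
    simp only [mul_add, add_mul]
    rw [c11_m2_a N hN x, c11_m2_b N hN x, c12_m2_a N hN x, c12_m2_b N hN x, c21_m2_a N hN x, c21_m2_b N hN x, c22_m2_a N hN x, c22_m2_b N hN x]
    abel
  rw [h2]
  simp only [Finset.sum_add_distrib, Finset.sum_sub_distrib, Finset.sum_neg_distrib,
    ← Finset.smul_sum]
  abel

lemma key (N : ℕ) [NeZero N] (hN : 7 ≤ N) : ∑ d : ZMod N, cmt N d = 0 := by
  have b_e0_e1 : (0 : ZMod N) ≠ (1 : ZMod N) := by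
    have h := cast_ne (N := N) (a := 0) (b := 1) (by omega) (by omega) (by omega)
    simpa using h
  have b_e0_e2 : (0 : ZMod N) ≠ (2 : ZMod N) := by
    have h := cast_ne (N := N) (a := 0) (b := 2) (by omega) (by omega) (by omega)
    simpa using h
  have b_e0_e3 : (0 : ZMod N) ≠ (3 : ZMod N) := by
    have h := cast_ne (N := N) (a := 0) (b := 3) (by omega) (by omega) (by omega)
    simpa using h
  have b_e0_e4 : (0 : ZMod N) ≠ (4 : ZMod N) := by
    have h := cast_ne (N := N) (a := 0) (b := 4) (by omega) (by omega) (by omega)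
    simpa using h
  have b_e0_em1 : (0 : ZMod N) ≠ (-1 : ZMod N) := by
    have h := cast_ne (N := N) (a := 0) (b := (N - 1)) (by omega) (by omega) (by omega)
    rw [neg_cast hN 1 (by omega)] at h
    simpa using h
  have b_e0_em2 : (0 : ZMod N) ≠ (-2 : ZMod N) := by
    have h := cast_ne (N := N) (a := 0) (b := (N - 2)) (by omega) (by omega) (by omega)
    rw [neg_cast hN 2 (by omega)] at h
    simpa using h
  have b_e1_e2 : (1 : ZMod N) ≠ (2 : ZMod N) := by
    have h := cast_ne (N := N) (a := 1) (b := 2) (by omega) (by omega) (by omega)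
    simpa using h
  have b_e1_e3 : (1 : ZMod N) ≠ (3 : ZMod N) := by
    have h := cast_ne (N := N) (a := 1) (b := 3) (by omega) (by omega) (by omega)
    simpa using h
  have b_e1_e4 : (1 : ZMod N) ≠ (4 : ZMod N) := by
    have h := cast_ne (N := N) (a := 1) (b := 4) (by omega) (by omega) (by omega)
    simpa using h
  have b_e1_em1 : (1 : ZMod N) ≠ (-1 : ZMod N) := by
    have h := cast_ne (N := N) (a := 1) (b := (N - 1)) (by omega) (by omega) (by omega)
    rw [neg_cast hN 1 (by omega)] at h
    simpa using h
  have b_e1_em2 : (1 : ZMod N) ≠ (-2 : ZMod N) := by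
    have h := cast_ne (N := N) (a := 1) (b := (N - 2)) (by omega) (by omega) (by omega)
    rw [neg_cast hN 2 (by omega)] at h
    simpa using h
  have b_e2_e3 : (2 : ZMod N) ≠ (3 : ZMod N) := by
    have h := cast_ne (N := N) (a := 2) (b := 3) (by omega) (by omega) (by omega)
    simpa using h
  have b_e2_e4 : (2 : ZMod N) ≠ (4 : ZMod N) := by
    have h := cast_ne (N := N) (a := 2) (b := 4) (by omega) (by omega) (by omega)
    simpa using h
  have b_e2_em1 : (2 : ZMod N) ≠ (-1 : ZMod N) := by
    have h := cast_ne (N := N) (a := 2) (b := (N - 1)) (by omega) (by omega) (by omega)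
    rw [neg_cast hN 1 (by omega)] at h
    simpa using h
  have b_e2_em2 : (2 : ZMod N) ≠ (-2 : ZMod N) := by
    have h := cast_ne (N := N) (a := 2) (b := (N - 2)) (by omega) (by omega) (by omega)
    rw [neg_cast hN 2 (by omega)] at h
    simpa using h
  have b_e3_e4 : (3 : ZMod N) ≠ (4 : ZMod N) := by
    have h := cast_ne (N := N) (a := 3) (b := 4) (by omega) (by omega) (by omega)
    simpa using h
  have b_e3_em1 : (3 : ZMod N) ≠ (-1 : ZMod N) := by
    have h := cast_ne (N := N) (a := 3) (b := (N - 1)) (by omega) (by omega) (by omega)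
    rw [neg_cast hN 1 (by omega)] at h
    simpa using h
  have b_e3_em2 : (3 : ZMod N) ≠ (-2 : ZMod N) := by
    have h := cast_ne (N := N) (a := 3) (b := (N - 2)) (by omega) (by omega) (by omega)
    rw [neg_cast hN 2 (by omega)] at h
    simpa using h
  have b_e4_em1 : (4 : ZMod N) ≠ (-1 : ZMod N) := by
    have h := cast_ne (N := N) (a := 4) (b := (N - 1)) (by omega) (by omega) (by omega)
    rw [neg_cast hN 1 (by omega)] at h
    simpa using h
  have b_e4_em2 : (4 : ZMod N) ≠ (-2 : ZMod N) := by
    have h := cast_ne (N := N) (a := 4) (b := (N - 2)) (by omega) (by omega) (by omega)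
    rw [neg_cast hN 2 (by omega)] at h
    simpa using h
  have b_em1_em2 : (-1 : ZMod N) ≠ (-2 : ZMod N) := by
    have h := cast_ne (N := N) (a := (N - 1)) (b := (N - 2)) (by omega) (by omega) (by omega)
    rw [neg_cast hN 1 (by omega)] at h
    rw [neg_cast hN 2 (by omega)] at h
    simpa using h
  have hvan : ∀ d ∈ (Finset.univ : Finset (ZMod N)),
      d ∉ ({0, 1, 2, 3, 4, -1, -2} : Finset (ZMod N)) → cmt N d = 0 := by
    intro d _ hd
    simp only [Finset.mem_insert, Finset.mem_singleton] at hd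
    push_neg at hd
    obtain ⟨u0, u1, u2, u3, u4, u5, u6⟩ := hd
    exact cmt_generic N hN u0 u1 u2 u3 u4 u5 u6
  rw [← Finset.sum_subset (Finset.subset_univ ({0, 1, 2, 3, 4, -1, -2} : Finset (ZMod N))) hvan]
  rw [Finset.sum_insert (by simp [b_e0_e1, b_e0_e2, b_e0_e3, b_e0_e4, b_e0_em1, b_e0_em2]), Finset.sum_insert (by simp [b_e1_e2, b_e1_e3, b_e1_e4, b_e1_em1, b_e1_em2]), Finset.sum_insert (by simp [b_e2_e3, b_e2_e4, b_e2_em1, b_e2_em2]), Finset.sum_insert (by simp [b_e3_e4, b_e3_em1, b_e3_em2]), Finset.sum_insert (by simp [b_e4_em1, b_e4_em2]), Finset.sum_insert (by simp [b_em1_em2]), Finset.sum_singleton]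
  rw [cmtL_0 N hN, cmtL_1 N hN, cmtL_2 N hN, cmtL_3 N hN, cmtL_4 N hN,
    cmtL_m1 N hN, cmtL_m2 N hN]
  abel

lemma hconvH (N : ℕ) [NeZero N] (hN : 7 ≤ N) :
    (∑ j ∈ Finset.range N,
      (PX N (j % N) * PX N ((j+1) % N) * PZ N ((j+2) % N)
        + PZ N (j % N) * PX N ((j+1) % N) * PX N ((j+2) % N)))
      = ∑ x : ZMod N, hsum N x := by
  refine Finset.sum_nbij' (fun j => (j : ZMod N)) (fun x => x.val) ?_ ?_ ?_ ?_ ?_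
  · intro a _; exact Finset.mem_univ _
  · intro b _; simp [Finset.mem_range, ZMod.val_lt]
  · intro a ha
    simp only [Finset.mem_range] at ha
    simp [ZMod.val_natCast, Nat.mod_eq_of_lt ha]
  · intro b _; exact ZMod.natCast_rightInverse b
  · intro j _
    unfold hsum ht1 ht2
    have c0 : (j % N) = ((j : ZMod N)).val := (ZMod.val_natCast _ _).symm
    have c1 : ((j+1) % N) = ((j : ZMod N) + 1).val := by
      rw [show ((j : ZMod N) + 1) = ((j+1 : ℕ) : ZMod N) from by push_cast; ring, ZMod.val_natCast]
    have c2 : ((j+2) % N) = ((j : ZMod N) + 2).val := by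
      rw [show ((j : ZMod N) + 2) = ((j+2 : ℕ) : ZMod N) from by push_cast; ring, ZMod.val_natCast]
    rw [c0, c1, c2]

lemma qconvQ (N : ℕ) [NeZero N] (hN : 7 ≤ N) :
    (∑ j ∈ Finset.range N,
      (PX N (j % N) * PX N ((j+1) % N) * PY N ((j+2) % N) * PX N ((j+3) % N)
          * PZ N ((j+4) % N)
        + PX N (j % N) * PY N ((j+2) % N) * PZ N ((j+3) % N)))
      = ∑ x : ZMod N, qsum N x := by
  refine Finset.sum_nbij' (fun j => (j : ZMod N)) (fun x => x.val) ?_ ?_ ?_ ?_ ?_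
  · intro a _; exact Finset.mem_univ _
  · intro b _; simp [Finset.mem_range, ZMod.val_lt]
  · intro a ha
    simp only [Finset.mem_range] at ha
    simp [ZMod.val_natCast, Nat.mod_eq_of_lt ha]
  · intro b _; exact ZMod.natCast_rightInverse b
  · intro j _
    unfold qsum qt1 qt2
    have c0 : (j % N) = ((j : ZMod N)).val := (ZMod.val_natCast _ _).symm
    have c1 : ((j+1) % N) = ((j : ZMod N) + 1).val := by
      rw [show ((j : ZMod N) + 1) = ((j+1 : ℕ) : ZMod N) from by push_cast; ring, ZMod.val_natCast]
    have c2 : ((j+2) % N) = ((j : ZMod N) + 2).val := by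
      rw [show ((j : ZMod N) + 2) = ((j+2 : ℕ) : ZMod N) from by push_cast; ring, ZMod.val_natCast]
    have c3 : ((j+3) % N) = ((j : ZMod N) + 3).val := by
      rw [show ((j : ZMod N) + 3) = ((j+3 : ℕ) : ZMod N) from by push_cast; ring, ZMod.val_natCast]
    have c4 : ((j+4) % N) = ((j : ZMod N) + 4).val := by
      rw [show ((j : ZMod N) + 4) = ((j+4 : ℕ) : ZMod N) from by push_cast; ring, ZMod.val_natCast]
    rw [c0, c1, c2, c3, c4]

end S6

theorem stmt6 (N : ℕ) (hN : 7 ≤ N) :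
    let H := ∑ j ∈ Finset.range N,
      (PX N (j % N) * PX N ((j+1) % N) * PZ N ((j+2) % N)
        + PZ N (j % N) * PX N ((j+1) % N) * PX N ((j+2) % N));
    let Q := ∑ j ∈ Finset.range N,
      (PX N (j % N) * PX N ((j+1) % N) * PY N ((j+2) % N) * PX N ((j+3) % N)
          * PZ N ((j+4) % N)
        + PX N (j % N) * PY N ((j+2) % N) * PZ N ((j+3) % N));
    Q * H = H * Q := by
  intro H Q
  haveI : NeZero N := ⟨by omega⟩
  have hH : H = ∑ x : ZMod N, S6.hsum N x := S6.hconvH N hN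
  have hQ : Q = ∑ x : ZMod N, S6.qsum N x := S6.qconvQ N hN
  rw [hQ, hH]
  rw [Finset.sum_mul_sum, Finset.sum_mul_sum]
  rw [← sub_eq_zero]
  have e2 : ∀ x : ZMod N,
      ((∑ y : ZMod N, S6.qsum N x * S6.hsum N y) - ∑ y : ZMod N, S6.hsum N y * S6.qsum N x)
        = ∑ d : ZMod N, (S6.qsum N x * S6.hsum N (x + d) - S6.hsum N (x + d) * S6.qsum N x) := by
    intro x
    rw [← Finset.sum_sub_distrib,
      ← S6.sum_shiftL x (fun y => S6.qsum N x * S6.hsum N y - S6.hsum N y * S6.qsum N x)]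
  have e1 : (∑ x : ZMod N, ∑ y : ZMod N, S6.qsum N x * S6.hsum N y)
      - (∑ y : ZMod N, ∑ x : ZMod N, S6.hsum N y * S6.qsum N x) = ∑ d : ZMod N, S6.cmt N d := by
    rw [Finset.sum_comm (s := Finset.univ) (t := Finset.univ)
      (f := fun y x => S6.hsum N y * S6.qsum N x)]
    rw [← Finset.sum_sub_distrib]
    rw [Finset.sum_congr rfl (fun x _ => e2 x)]
    rw [Finset.sum_comm]
    unfold S6.cmt
    rfl
  rw [e1]
  exact S6.key N hN
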